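/- Positive definiteness of the block matrix P: if positive reals τ_X, τ_W, γ, ρ satisfy γ(τ_X+ρ) > 1, γτ_W > 1, and 2 − γ − 2γρ > 0, then the Hermitian quaternion block matrix P = [[(τ_X+ρ)I_n, 0, (1/γ)I_n], [0, τ_W I_{2n} + ρH*H, (1/γ)H*], [(1/γ)I_n, (1/γ)H, ((2−γ)/(γ^2ρ))I_n]] is positive definite, where H = [I_n, O] is n×2n. -/

import Mathlib

open scoped Quaternion Matrix RealInnerProductSpace

private lemma star_rsmul' (r : ℝ) (q : ℍ[ℝ]) : star (r • q) = r • star q := by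
  ext <;> simp

private lemma ct_rsmul' {m n : Type*} (r : ℝ) (M : Matrix m n ℍ[ℝ]) : (r • M)ᴴ = r • Mᴴ := by
  apply Matrix.ext; intro i j
  rw [Matrix.conjTranspose_apply, Matrix.smul_apply, Matrix.smul_apply,
    Matrix.conjTranspose_apply, star_rsmul']

private lemma re_mul_comm' (a b : ℍ[ℝ]) : (a * b).re = (b * a).re := by
  simp only [Quaternion.re_mul]; ring

private lemma quad_term' (a b : ℍ[ℝ]) (r : ℝ) : (star a * (r • b)).re = r * ⟪a, b⟫ := by
  rw [mul_smul_comm]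
  have h1 : ((r • (star a * b)).re) = r * (star a * b).re := by
    simp [Quaternion.re_smul]
  rw [h1, re_mul_comm', ← Quaternion.inner_def, real_inner_comm]

private lemma re_sum' {ι : Type*} (s : Finset ι) (f : ι → ℍ[ℝ]) :
    (∑ i ∈ s, f i).re = ∑ i ∈ s, (f i).re := by
  classical
  induction s using Finset.induction_on with
  | empty => simp
  | insert _ _ h ih => simp [Finset.sum_insert h, ih]

private lemma bracket_nonneg (g A K a d : ℝ) (hg : 0 < g) (hA : g < A) (hK : 2 * g < K) :
    0 ≤ A * a ^ 2 - 2 * g * (a * d) + (K / 2) * d ^ 2 := by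
  have hApos : 0 < A := hg.trans hA
  have h' : g ^ 2 < A * (K / 2) := by nlinarith
  nlinarith [sq_nonneg (A * a - g * d), mul_nonneg (sub_nonneg.mpr h'.le) (sq_nonneg d)]

private lemma bracket_pos (g A K a d : ℝ) (hg : 0 < g) (hA : g < A) (hK : 2 * g < K)
    (hd : 0 < d) :
    0 < A * a ^ 2 - 2 * g * (a * d) + (K / 2) * d ^ 2 := by
  have hApos : 0 < A := hg.trans hA
  have h' : g ^ 2 < A * (K / 2) := by nlinarith
  nlinarith [sq_nonneg (A * a - g * d), mul_pos (sub_pos.mpr h') (mul_pos hd hd)]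

private lemma scalar_nonneg (g A B C K a b c d t1 t2 : ℝ)
    (hg : 0 < g) (hA : g < A) (hB : g < B) (hC : 0 < C) (hK : 2 * g < K)
    (ht1 : |t1| ≤ a * d) (ht2 : |t2| ≤ b * d) :
    0 ≤ A * a ^ 2 + B * b ^ 2 + C * c ^ 2 + K * d ^ 2 + 2 * g * t1 + 2 * g * t2 := by
  have h1 := bracket_nonneg g A K a d hg hA hK
  have h2 := bracket_nonneg g B K b d hg hB hK
  have e1 : -(a * d) ≤ t1 := neg_le_of_abs_le ht1
  have e2 : -(b * d) ≤ t2 := neg_le_of_abs_le ht2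
  have hc2 : 0 ≤ C * c ^ 2 := mul_nonneg hC.le (sq_nonneg c)
  nlinarith [mul_le_mul_of_nonneg_left e1 (by linarith : (0:ℝ) ≤ 2 * g),
    mul_le_mul_of_nonneg_left e2 (by linarith : (0:ℝ) ≤ 2 * g)]

private lemma scalar_pos (g A B C K a b c d t1 t2 : ℝ)
    (hg : 0 < g) (hA : g < A) (hB : g < B) (hC : 0 < C) (hK : 2 * g < K)
    (ha : 0 ≤ a) (hb : 0 ≤ b) (hd : 0 ≤ d)
    (ht1 : |t1| ≤ a * d) (ht2 : |t2| ≤ b * d)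
    (hne : 0 < a ∨ 0 < b ∨ 0 < c ∨ 0 < d) :
    0 < A * a ^ 2 + B * b ^ 2 + C * c ^ 2 + K * d ^ 2 + 2 * g * t1 + 2 * g * t2 := by
  have e1 : -(a * d) ≤ t1 := neg_le_of_abs_le ht1
  have e2 : -(b * d) ≤ t2 := neg_le_of_abs_le ht2
  have hc2 : 0 ≤ C * c ^ 2 := mul_nonneg hC.le (sq_nonneg c)
  rcases eq_or_lt_of_le hd with hd0 | hdpos
  · -- d = 0
    have hd0' : d = 0 := hd0.symm
    subst hd0'
    have ht1' : t1 = 0 := by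
      have := abs_nonneg t1; have : |t1| = 0 := le_antisymm (by simpa using ht1) (abs_nonneg t1)
      exact abs_eq_zero.mp this
    have ht2' : t2 = 0 := by
      have : |t2| = 0 := le_antisymm (by simpa using ht2) (abs_nonneg t2)
      exact abs_eq_zero.mp this
    subst ht1'; subst ht2'
    have hA0 : 0 < A := hg.trans hA
    have hB0 : 0 < B := hg.trans hB
    rcases hne with h | h | h | h
    · nlinarith [mul_pos hA0 (mul_pos h h), mul_nonneg hB0.le (sq_nonneg b),
        mul_nonneg hC.le (sq_nonneg c)]
    · nlinarith [mul_pos hB0 (mul_pos h h), mul_nonneg hA0.le (sq_nonneg a),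
        mul_nonneg hC.le (sq_nonneg c)]
    · nlinarith [mul_pos hC (mul_pos h h), mul_nonneg hA0.le (sq_nonneg a),
        mul_nonneg hB0.le (sq_nonneg b)]
    · exact absurd h (lt_irrefl 0)
  · have h1 := bracket_pos g A K a d hg hA hK hdpos
    have h2 := bracket_nonneg g B K b d hg hB hK
    nlinarith [mul_le_mul_of_nonneg_left e1 (by linarith : (0:ℝ) ≤ 2 * g),
      mul_le_mul_of_nonneg_left e2 (by linarith : (0:ℝ) ≤ 2 * g)]

set_option maxHeartbeats 2000000 in
/-- Positive definiteness of the block matrix `P`: if positive reals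
`τ_X, τ_W, γ, ρ` satisfy `γ(τ_X+ρ) > 1`, `γ τ_W > 1` and `2 − γ − 2γρ > 0`,
then the Hermitian quaternion block matrix
`P = [[(τ_X+ρ)I, 0, (1/γ)I], [0, τ_W I + ρ H*H, (1/γ)H*], [(1/γ)I, (1/γ)H, ((2−γ)/(γ²ρ))I]]`
with `H = [I_n, O]` is positive definite. -/
theorem P_posDef {n : ℕ} (τX τW γ ρ : ℝ)
    (hτX : 0 < τX) (hτW : 0 < τW) (hγ : 0 < γ) (hρ : 0 < ρ)
    (h1 : 1 < γ * (τX + ρ)) (h2 : 1 < γ * τW) (h3 : 0 < 2 - γ - 2 * γ * ρ)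
    (H : Matrix (Fin n) (Fin n ⊕ Fin n) ℍ[ℝ])
    (hH : H = Matrix.fromCols (1 : Matrix (Fin n) (Fin n) ℍ[ℝ]) 0)
    (P : Matrix ((Fin n ⊕ (Fin n ⊕ Fin n)) ⊕ Fin n)
        ((Fin n ⊕ (Fin n ⊕ Fin n)) ⊕ Fin n) ℍ[ℝ])
    (hP : P = Matrix.fromBlocks
      (Matrix.fromBlocks ((τX + ρ) • (1 : Matrix (Fin n) (Fin n) ℍ[ℝ])) 0 0
        (τW • (1 : Matrix (Fin n ⊕ Fin n) (Fin n ⊕ Fin n) ℍ[ℝ]) + ρ • (Hᴴ * H)))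
      (Matrix.fromRows ((1 / γ) • (1 : Matrix (Fin n) (Fin n) ℍ[ℝ])) ((1 / γ) • Hᴴ))
      (Matrix.fromCols ((1 / γ) • (1 : Matrix (Fin n) (Fin n) ℍ[ℝ])) ((1 / γ) • H))
      (((2 - γ) / (γ ^ 2 * ρ)) • (1 : Matrix (Fin n) (Fin n) ℍ[ℝ]))) :
    Pᴴ = P ∧
    ∀ u : (Fin n ⊕ (Fin n ⊕ Fin n)) ⊕ Fin n → ℍ[ℝ],
      u ≠ 0 → 0 < (star u ⬝ᵥ P.mulVec u).re := by
  subst hH hP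
  constructor
  · apply Matrix.ext; rintro ((i | (i | i)) | i) ((j | (j | j)) | j) <;>
      simp [Matrix.conjTranspose_apply, Matrix.fromBlocks, Matrix.fromCols,
        Matrix.fromRows_apply_inl, Matrix.fromRows_apply_inr, Matrix.one_apply, Matrix.mul_apply, star_rsmul',
        apply_ite star, star_one, star_zero, Finset.sum_ite_eq, Finset.sum_ite_eq',
        ite_mul, mul_ite, zero_mul, mul_zero, eq_comm]
  intro u hu
  set K : ℝ := (2 - γ) / (γ ^ 2 * ρ) with hKdef
  set Pm := (Matrix.fromBlocks
      (Matrix.fromBlocks ((τX + ρ) • (1 : Matrix (Fin n) (Fin n) ℍ[ℝ])) 0 0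
        (τW • (1 : Matrix (Fin n ⊕ Fin n) (Fin n ⊕ Fin n) ℍ[ℝ]) +
          ρ • ((Matrix.fromCols (1 : Matrix (Fin n) (Fin n) ℍ[ℝ]) 0)ᴴ *
            Matrix.fromCols (1 : Matrix (Fin n) (Fin n) ℍ[ℝ]) 0)))
      (Matrix.fromRows ((1 / γ) • (1 : Matrix (Fin n) (Fin n) ℍ[ℝ]))
        ((1 / γ) • (Matrix.fromCols (1 : Matrix (Fin n) (Fin n) ℍ[ℝ]) 0)ᴴ))
      (Matrix.fromCols ((1 / γ) • (1 : Matrix (Fin n) (Fin n) ℍ[ℝ]))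
        ((1 / γ) • Matrix.fromCols (1 : Matrix (Fin n) (Fin n) ℍ[ℝ]) 0))
      (K • (1 : Matrix (Fin n) (Fin n) ℍ[ℝ]))) with hPm
  -- the components of u
  set x : Fin n → ℍ[ℝ] := fun i => u (.inl (.inl i)) with hx
  set w1 : Fin n → ℍ[ℝ] := fun i => u (.inl (.inr (.inl i))) with hw1
  set w2 : Fin n → ℍ[ℝ] := fun i => u (.inl (.inr (.inr i))) with hw2
  set y : Fin n → ℍ[ℝ] := fun i => u (.inr i) with hy
  have hmv : ∀ k, Pm.mulVec u k = Sum.elim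
      (Sum.elim (fun i => (τX + ρ) • x i + (1 / γ) • y i)
        (Sum.elim (fun i => (τW + ρ) • w1 i + (1 / γ) • y i)
          (fun i => τW • w2 i)))
      (fun i => (1 / γ) • x i + (1 / γ) • w1 i + K • y i) k := by
    rintro ((i | (i | i)) | i) <;>
      simp [hPm, hx, hw1, hw2, hy, Matrix.mulVec, dotProduct, Fintype.sum_sum_type,
        Matrix.one_apply, Matrix.mul_apply, Matrix.fromCols, Matrix.fromRows_apply_inl, Matrix.fromRows_apply_inr,
        Matrix.fromBlocks, ite_smul, smul_ite, Finset.sum_ite_eq, Finset.sum_ite_eq',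
        add_smul, smul_smul, Finset.sum_add_distrib, add_mul, ite_mul, mul_ite,
        apply_ite star, star_one, star_zero, smul_mul_assoc, mul_smul_comm, zero_mul, mul_zero]
  have hre : (star u ⬝ᵥ Pm.mulVec u).re =
      ∑ i : Fin n, ((τX + ρ) * ‖x i‖ ^ 2 + (τW + ρ) * ‖w1 i‖ ^ 2 + τW * ‖w2 i‖ ^ 2
        + K * ‖y i‖ ^ 2 + 2 * (1 / γ) * ⟪x i, y i⟫ + 2 * (1 / γ) * ⟪w1 i, y i⟫) := by
    have : star u ⬝ᵥ Pm.mulVec u = ∑ k, star (u k) * Pm.mulVec u k := rfl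
    rw [this]
    rw [Fintype.sum_sum_type, Fintype.sum_sum_type, Fintype.sum_sum_type]
    simp only [hmv, Sum.elim_inl, Sum.elim_inr]
    rw [Quaternion.re_add, Quaternion.re_add, Quaternion.re_add,
      re_sum', re_sum', re_sum', re_sum']
    rw [← Finset.sum_add_distrib, ← Finset.sum_add_distrib, ← Finset.sum_add_distrib]
    apply Finset.sum_congr rfl
    intro i _
    simp only [mul_add, Quaternion.re_add, quad_term']
    rw [real_inner_self_eq_norm_sq, real_inner_self_eq_norm_sq,
      real_inner_self_eq_norm_sq, real_inner_self_eq_norm_sq]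
    rw [real_inner_comm (y i) (x i), real_inner_comm (y i) (w1 i)]
    ring
  rw [hre]
  -- real facts
  have hg : (0:ℝ) < 1 / γ := by positivity
  have hA : 1 / γ < τX + ρ := by rw [div_lt_iff₀ hγ]; nlinarith
  have hB : 1 / γ < τW + ρ := by
    rw [div_lt_iff₀ hγ]
    nlinarith
  have hK2 : 2 * (1 / γ) < K := by
    rw [hKdef, mul_one_div, div_lt_div_iff₀ hγ (by positivity)]
    nlinarith
  -- pointwise bounds
  have hterm_nonneg : ∀ i : Fin n, 0 ≤ (τX + ρ) * ‖x i‖ ^ 2 + (τW + ρ) * ‖w1 i‖ ^ 2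
      + τW * ‖w2 i‖ ^ 2 + K * ‖y i‖ ^ 2 + 2 * (1 / γ) * ⟪x i, y i⟫
      + 2 * (1 / γ) * ⟪w1 i, y i⟫ := fun i =>
    scalar_nonneg (1 / γ) (τX + ρ) (τW + ρ) τW K ‖x i‖ ‖w1 i‖ ‖w2 i‖ ‖y i‖ _ _
      hg hA hB hτW hK2 (abs_real_inner_le_norm _ _) (abs_real_inner_le_norm _ _)
  have hterm_pos : ∀ i : Fin n, (x i ≠ 0 ∨ w1 i ≠ 0 ∨ w2 i ≠ 0 ∨ y i ≠ 0) →
      0 < (τX + ρ) * ‖x i‖ ^ 2 + (τW + ρ) * ‖w1 i‖ ^ 2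
      + τW * ‖w2 i‖ ^ 2 + K * ‖y i‖ ^ 2 + 2 * (1 / γ) * ⟪x i, y i⟫
      + 2 * (1 / γ) * ⟪w1 i, y i⟫ := by
    intro i hi
    refine scalar_pos (1 / γ) (τX + ρ) (τW + ρ) τW K ‖x i‖ ‖w1 i‖ ‖w2 i‖ ‖y i‖ _ _
      hg hA hB hτW hK2 (norm_nonneg _) (norm_nonneg _) (norm_nonneg _)
      (abs_real_inner_le_norm _ _) (abs_real_inner_le_norm _ _) ?_
    rcases hi with h | h | h | h
    · exact Or.inl (norm_pos_iff.mpr h)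
    · exact Or.inr (Or.inl (norm_pos_iff.mpr h))
    · exact Or.inr (Or.inr (Or.inl (norm_pos_iff.mpr h)))
    · exact Or.inr (Or.inr (Or.inr (norm_pos_iff.mpr h)))
  -- some component is nonzero
  obtain ⟨k, hk⟩ := Function.ne_iff.mp hu
  have : ∃ i : Fin n, x i ≠ 0 ∨ w1 i ≠ 0 ∨ w2 i ≠ 0 ∨ y i ≠ 0 := by
    rcases k with ((i | (i | i)) | i)
    · exact ⟨i, Or.inl (by simpa [hx] using hk)⟩
    · exact ⟨i, Or.inr (Or.inl (by simpa [hw1] using hk))⟩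
    · exact ⟨i, Or.inr (Or.inr (Or.inl (by simpa [hw2] using hk)))⟩
    · exact ⟨i, Or.inr (Or.inr (Or.inr (by simpa [hy] using hk)))⟩
  obtain ⟨i0, hi0⟩ := this
  exact Finset.sum_pos' (fun i _ => hterm_nonneg i) ⟨i0, Finset.mem_univ i0, hterm_pos i0 hi0⟩
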